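/- Let ν > 0 and fix λ > 0. Then limsup_{t→∞} t^{min(2ν, ν+1)} K_2(t;λ) ≤ 2/(ν λ^ν). -/

import Mathlib

open Filter

/-- `K₂(t;λ) = ∫_λ^t u^{-(ν+1)} (t+λ−u)^{-min(2ν, ν+1)} du`. -/
noncomputable def K₂ (ν t lam : ℝ) : ℝ :=
  ∫ u in lam..t, u ^ (-(ν + 1)) * (t + lam - u) ^ (-(min (2 * ν) (ν + 1)))

open MeasureTheory intervalIntegral Real Topology

private lemma aux_int_rpow {p a b : ℝ} (hp : 0 < p) (ha : 0 < a) (hab : a ≤ b) :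
    ∫ u in a..b, u ^ (-(p + 1)) ≤ a ^ (-p) / p := by
  have hne : -(p + 1) ≠ -1 := by intro h; nlinarith [neg_injective h]
  have h0 : (0:ℝ) ∉ Set.uIcc a b := by
    rw [Set.uIcc_of_le hab]; exact fun h => absurd h.1 (not_le.mpr ha)
  rw [integral_rpow (Or.inr ⟨hne, h0⟩)]
  have he : -(p + 1) + 1 = -p := by ring
  rw [he]
  have hb : 0 < b := lt_of_lt_of_le ha hab
  have h1 : (0:ℝ) < b ^ (-p) := rpow_pos_of_pos hb _
  calc (b ^ (-p) - a ^ (-p)) / (-p) = (a ^ (-p) - b ^ (-p)) / p := by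
        rw [div_neg, ← neg_div, neg_sub]
      _ ≤ a ^ (-p) / p := by gcongr <;> linarith

private lemma aux_integrable {q r c a b : ℝ} (ha : 0 < a) (hab : a ≤ b) (hbc : b < c) :
    IntervalIntegrable (fun u : ℝ => u ^ q * (c - u) ^ r) volume a b := by
  apply ContinuousOn.intervalIntegrable
  rw [Set.uIcc_of_le hab]
  apply ContinuousOn.mul
  · exact continuousOn_id.rpow_const fun x hx => Or.inl (ne_of_gt (lt_of_lt_of_le ha hx.1))
  · exact (continuousOn_const.sub continuousOn_id).rpow_const
      fun x hx => Or.inl (ne_of_gt (by have := hx.2; dsimp; linarith))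

private lemma aux_integrable_right {r c a b k : ℝ} (hbc : b < c) (hab : a ≤ b) :
    IntervalIntegrable (fun u : ℝ => k * (c - u) ^ r) volume a b := by
  apply ContinuousOn.intervalIntegrable
  rw [Set.uIcc_of_le hab]
  exact continuousOn_const.mul ((continuousOn_const.sub continuousOn_id).rpow_const
      fun x hx => Or.inl (ne_of_gt (by have := hx.2; dsimp; linarith)))

private lemma aux_integrable_rpow {q a b : ℝ} (ha : 0 < a) (hab : a ≤ b) :
    IntervalIntegrable (fun u : ℝ => u ^ q) volume a b := by
  apply ContinuousOn.intervalIntegrable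
  rw [Set.uIcc_of_le hab]
  exact continuousOn_id.rpow_const fun x hx => Or.inl (ne_of_gt (lt_of_lt_of_le ha hx.1))

/-- Bound for pieces where `c - u` is bounded below by `d`. -/
private lemma piece1 {p mm c a b d : ℝ} (hmm : 0 ≤ mm) (hp : 0 < p) (ha : 0 < a)
    (hab : a ≤ b) (hd : 0 < d) (hdb : d ≤ c - b) :
    ∫ u in a..b, u ^ (-(p + 1)) * (c - u) ^ (-mm) ≤ d ^ (-mm) * (a ^ (-p) / p) := by
  have hbc : b < c := by linarith
  have h1 : (∫ u in a..b, u ^ (-(p + 1)) * (c - u) ^ (-mm))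
      ≤ ∫ u in a..b, u ^ (-(p + 1)) * d ^ (-mm) := by
    apply integral_mono_on hab (aux_integrable ha hab hbc)
      ((aux_integrable_rpow ha hab).mul_const _)
    intro x hx
    have hx0 : 0 ≤ x := le_trans ha.le hx.1
    refine mul_le_mul_of_nonneg_left ?_ (rpow_nonneg hx0 _)
    exact rpow_le_rpow_of_nonpos hd (by linarith [hx.2]) (neg_nonpos.mpr hmm)
  rw [intervalIntegral.integral_mul_const] at h1
  refine h1.trans ?_
  rw [mul_comm]
  exact mul_le_mul_of_nonneg_left (aux_int_rpow hp ha hab) (rpow_nonneg hd.le _)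


/-- Bound for the piece `[c/2, c-A]`. -/
private lemma piece3 {ν mm c A : ℝ} (hν : 0 < ν) (hA : 0 < A) (hmν : ν < mm)
    (hm1 : mm ≤ ν + 1) (hAc : A ≤ c / 2) :
    ∫ u in (c/2).. (c - A), u ^ (-(ν + 1)) * (c - u) ^ (-mm)
      ≤ (c / 2) ^ (-mm) * (A ^ (-ν) / ν) := by
  have hc2 : 0 < c / 2 := lt_of_lt_of_le hA hAc
  have hord : c / 2 ≤ c - A := by linarith
  have hkey : ∀ x ∈ Set.Icc (c/2) (c - A),
      x ^ (-(ν + 1)) * (c - x) ^ (-mm) ≤ (c/2) ^ (-mm) * (c - x) ^ (-(ν + 1)) := by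
    intro x hx
    have hx1 : c / 2 ≤ x := hx.1
    have hcx0 : 0 < c - x := by have := hx.2; linarith
    have hcx2 : c - x ≤ c / 2 := by have := hx.1; linarith
    have e1 : x ^ (-(ν + 1)) ≤ (c/2) ^ (-(ν+1)) :=
      rpow_le_rpow_of_nonpos hc2 hx1 (by linarith)
    have e2 : (c - x) ^ (-mm) = (c - x) ^ (-(ν+1)) * (c - x) ^ (ν + 1 - mm) := by
      rw [← rpow_add hcx0]; congr 1; ring
    have e3 : (c - x) ^ (ν + 1 - mm) ≤ (c/2) ^ (ν + 1 - mm) :=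
      rpow_le_rpow hcx0.le hcx2 (by linarith)
    have e4 : (c/2) ^ (-(ν+1)) * (c/2) ^ (ν + 1 - mm) = (c/2) ^ (-mm) := by
      rw [← rpow_add hc2]; congr 1; ring
    calc x ^ (-(ν + 1)) * (c - x) ^ (-mm)
        = x ^ (-(ν + 1)) * ((c - x) ^ (-(ν+1)) * (c - x) ^ (ν + 1 - mm)) := by rw [← e2]
      _ ≤ (c/2) ^ (-(ν+1)) * ((c - x) ^ (-(ν+1)) * (c/2) ^ (ν + 1 - mm)) := by
          apply mul_le_mul e1 (mul_le_mul_of_nonneg_left e3 (rpow_nonneg hcx0.le _))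
            (mul_nonneg (rpow_nonneg hcx0.le _) (rpow_nonneg hcx0.le _)) (rpow_nonneg hc2.le _)
      _ = (c/2) ^ (-mm) * (c - x) ^ (-(ν+1)) := by rw [← e4]; ring
  have hint : (∫ u in (c/2).. (c-A), u ^ (-(ν + 1)) * (c - u) ^ (-mm))
      ≤ ∫ u in (c/2).. (c-A), (c/2) ^ (-mm) * (c - u) ^ (-(ν+1)) :=
    integral_mono_on hord (aux_integrable hc2 hord (by linarith))
      (aux_integrable_right (by linarith) hord) hkey
  refine hint.trans ?_
  rw [intervalIntegral.integral_const_mul]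
  apply mul_le_mul_of_nonneg_left ?_ (rpow_nonneg hc2.le _)
  have hsub : (∫ u in (c/2).. (c - A), (c - u) ^ (-(ν+1)))
      = ∫ v in (c - (c - A)).. (c - c/2), v ^ (-(ν+1)) :=
    intervalIntegral.integral_comp_sub_left (fun v : ℝ => v ^ (-(ν+1))) c
  rw [show c - (c - A) = A from by ring, show c - c/2 = c/2 from by ring] at hsub
  rw [hsub]
  exact aux_int_rpow hν hA hAc

/-- Bound for the last piece `[t+lam-A, t]`. -/
private lemma piece4 {ν mm lam A t : ℝ} (hν : 0 < ν) (hlam : 0 < lam) (hlA : lam ≤ A)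
    (hAt : 0 < t + lam - A) :
    ∫ u in (t + lam - A)..t, u ^ (-(ν + 1)) * (t + lam - u) ^ (-mm)
      ≤ (t + lam - A) ^ (-(ν + 1)) * ∫ v in lam..A, v ^ (-mm) := by
  have hord : t + lam - A ≤ t := by linarith
  have hkey : ∀ x ∈ Set.Icc (t + lam - A) t,
      x ^ (-(ν + 1)) * (t + lam - x) ^ (-mm)
        ≤ (t + lam - A) ^ (-(ν + 1)) * (t + lam - x) ^ (-mm) := by
    intro x hx
    have hx2 : 0 ≤ t + lam - x := by have := hx.2; linarith
    exact mul_le_mul_of_nonneg_right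
      (rpow_le_rpow_of_nonpos hAt hx.1 (by linarith)) (rpow_nonneg hx2 _)
  have hint : (∫ u in (t + lam - A)..t, u ^ (-(ν + 1)) * (t + lam - u) ^ (-mm))
      ≤ ∫ u in (t + lam - A)..t, (t + lam - A) ^ (-(ν + 1)) * (t + lam - u) ^ (-mm) :=
    integral_mono_on hord (aux_integrable hAt hord (by linarith))
      (aux_integrable_right (by linarith) hord) hkey
  refine hint.trans ?_
  rw [intervalIntegral.integral_const_mul]
  apply mul_le_mul_of_nonneg_left ?_ (rpow_nonneg hAt.le _)
  have hsub : (∫ u in (t + lam - A)..t, (t + lam - u) ^ (-mm))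
      = ∫ v in (t + lam - t).. (t + lam - (t + lam - A)), v ^ (-mm) :=
    intervalIntegral.integral_comp_sub_left (fun v : ℝ => v ^ (-mm)) (t + lam)
  rw [show t + lam - t = lam from by ring, show t + lam - (t + lam - A) = A from by ring] at hsub
  exact le_of_eq hsub

private lemma tendsto_ratio (b : ℝ) :
    Tendsto (fun t : ℝ => t / (t + b)) atTop (𝓝 1) := by
  have h1 : Tendsto (fun t : ℝ => t + b) atTop atTop :=
    tendsto_atTop_add_const_right _ b tendsto_id
  have h2 : Tendsto (fun t : ℝ => b / (t + b)) atTop (𝓝 0) :=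
    Tendsto.div_atTop tendsto_const_nhds h1
  have h3 : Tendsto (fun t : ℝ => 1 - b / (t + b)) atTop (𝓝 1) := by
    simpa using tendsto_const_nhds.sub h2
  apply h3.congr'
  filter_upwards [eventually_gt_atTop (|b| + 1)] with t ht
  have hb : -|b| ≤ b := neg_abs_le b
  have htb : 0 < t + b := by linarith
  field_simp
  ring

theorem stmt_18 (ν lam : ℝ) (hν : 0 < ν) (hlam : 0 < lam) :
    limsup (fun t : ℝ => t ^ (min (2 * ν) (ν + 1)) * K₂ ν t lam) atTop ≤
      2 / (ν * lam ^ ν) := by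
  set mm := min (2 * ν) (ν + 1) with hmmdef
  have hmν : ν < mm := lt_min (by linarith) (by linarith)
  have hmm0 : 0 ≤ mm := by linarith
  have hm1 : mm ≤ ν + 1 := min_le_right _ _
  have hlamν : 0 < lam ^ (-ν) / ν := div_pos (rpow_pos_of_pos hlam _) hν
  have key : ∀ A : ℝ, lam < A →
      limsup (fun t : ℝ => t ^ mm * K₂ ν t lam) atTop
        ≤ 2 * (lam ^ (-ν) / ν) + (2:ℝ) ^ (mm + 1) * (A ^ (-ν) / ν) := by
    intro A hlA
    have hA0 : 0 < A := hlam.trans hlA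
    set C : ℝ := ∫ v in lam..A, v ^ (-mm) with hCdef
    have hC0 : 0 ≤ C :=
      intervalIntegral.integral_nonneg hlA.le fun x hx => rpow_nonneg (by linarith [hx.1]) _
    set B : ℝ → ℝ := fun t => (t / (t + lam - A)) ^ mm * (lam ^ (-ν) / ν)
        + (t / (t + lam - A)) ^ (ν + 1) * t ^ (mm - ν - 1) * C
        + (2 * t / (t + lam)) ^ mm * (2 * (A ^ (-ν) / ν)) with hBdef
    -- the eventual bound
    have hev : ∀ᶠ t in atTop, t ^ mm * K₂ ν t lam ≤ B t := by
      filter_upwards [eventually_ge_atTop (2 * A + 1)] with t ht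
      have ht0 : 0 < t := by linarith
      have hcA : 0 < t + lam - A := by linarith
      have hA2 : A ≤ (t + lam) / 2 := by linarith
      have h2pos : 0 < (t + lam) / 2 := by linarith
      have hK : K₂ ν t lam = ∫ u in lam..t, u ^ (-(ν + 1)) * (t + lam - u) ^ (-mm) := by
        rw [K₂, hmmdef]
      have i1 : IntervalIntegrable
          (fun u : ℝ => u ^ (-(ν + 1)) * (t + lam - u) ^ (-mm)) volume lam A :=
        aux_integrable hlam hlA.le (by linarith)
      have i2 : IntervalIntegrable
          (fun u : ℝ => u ^ (-(ν + 1)) * (t + lam - u) ^ (-mm)) volume A ((t + lam)/2) :=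
        aux_integrable hA0 hA2 (by linarith)
      have i3 : IntervalIntegrable
          (fun u : ℝ => u ^ (-(ν + 1)) * (t + lam - u) ^ (-mm)) volume ((t + lam)/2)
            (t + lam - A) :=
        aux_integrable h2pos (by linarith) (by linarith)
      have i4 : IntervalIntegrable
          (fun u : ℝ => u ^ (-(ν + 1)) * (t + lam - u) ^ (-mm)) volume (t + lam - A) t :=
        aux_integrable hcA (by linarith) (by linarith)
      have e3 : (∫ u in ((t + lam)/2)..t, u ^ (-(ν + 1)) * (t + lam - u) ^ (-mm))
          = (∫ u in ((t + lam)/2).. (t + lam - A), u ^ (-(ν + 1)) * (t + lam - u) ^ (-mm))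
            + ∫ u in (t + lam - A)..t, u ^ (-(ν + 1)) * (t + lam - u) ^ (-mm) :=
        (integral_add_adjacent_intervals i3 i4).symm
      have e2 : (∫ u in A..t, u ^ (-(ν + 1)) * (t + lam - u) ^ (-mm))
          = (∫ u in A..((t + lam)/2), u ^ (-(ν + 1)) * (t + lam - u) ^ (-mm))
            + ∫ u in ((t + lam)/2)..t, u ^ (-(ν + 1)) * (t + lam - u) ^ (-mm) :=
        (integral_add_adjacent_intervals i2 (i3.trans i4)).symm
      have e1 : (∫ u in lam..t, u ^ (-(ν + 1)) * (t + lam - u) ^ (-mm))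
          = (∫ u in lam..A, u ^ (-(ν + 1)) * (t + lam - u) ^ (-mm))
            + ∫ u in A..t, u ^ (-(ν + 1)) * (t + lam - u) ^ (-mm) :=
        (integral_add_adjacent_intervals i1 ((i2.trans i3).trans i4)).symm
      have p1 : (∫ u in lam..A, u ^ (-(ν + 1)) * (t + lam - u) ^ (-mm))
          ≤ (t + lam - A) ^ (-mm) * (lam ^ (-ν) / ν) :=
        piece1 hmm0 hν hlam hlA.le hcA (le_refl _)
      have p2 : (∫ u in A..((t + lam)/2), u ^ (-(ν + 1)) * (t + lam - u) ^ (-mm))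
          ≤ ((t + lam)/2) ^ (-mm) * (A ^ (-ν) / ν) :=
        piece1 hmm0 hν hA0 hA2 h2pos (by linarith)
      have p3 : (∫ u in ((t + lam)/2).. (t + lam - A), u ^ (-(ν + 1)) * (t + lam - u) ^ (-mm))
          ≤ ((t + lam)/2) ^ (-mm) * (A ^ (-ν) / ν) :=
        piece3 hν hA0 hmν hm1 hA2
      have p4 : (∫ u in (t + lam - A)..t, u ^ (-(ν + 1)) * (t + lam - u) ^ (-mm))
          ≤ (t + lam - A) ^ (-(ν + 1)) * C :=
        piece4 hν hlam hlA.le hcA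
      have hsum : K₂ ν t lam ≤ (t + lam - A) ^ (-mm) * (lam ^ (-ν) / ν)
          + (((t + lam)/2) ^ (-mm) * (A ^ (-ν) / ν)
            + (((t + lam)/2) ^ (-mm) * (A ^ (-ν) / ν)
              + (t + lam - A) ^ (-(ν + 1)) * C)) := by
        rw [hK, e1, e2, e3]
        exact add_le_add p1 (add_le_add p2 (add_le_add p3 p4))
      have ee1 : t ^ mm * (t + lam - A) ^ (-mm) = (t / (t + lam - A)) ^ mm := by
        rw [Real.div_rpow ht0.le hcA.le, Real.rpow_neg hcA.le, div_eq_mul_inv]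
      have ee2 : t ^ mm * ((t + lam)/2) ^ (-mm) = (2 * t / (t + lam)) ^ mm := by
        rw [show 2 * t / (t + lam) = t / ((t + lam)/2) from by
              rw [div_div_eq_mul_div]; ring,
          Real.div_rpow ht0.le h2pos.le, Real.rpow_neg h2pos.le]
        ring
      have ee3 : t ^ mm * (t + lam - A) ^ (-(ν + 1))
          = (t / (t + lam - A)) ^ (ν + 1) * t ^ (mm - ν - 1) := by
        have hsplit : t ^ mm = t ^ (ν + 1) * t ^ (mm - ν - 1) := by
          rw [← Real.rpow_add ht0]; congr 1; ring
        rw [hsplit, Real.div_rpow ht0.le hcA.le, Real.rpow_neg hcA.le]; ring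
      calc t ^ mm * K₂ ν t lam
          ≤ t ^ mm * ((t + lam - A) ^ (-mm) * (lam ^ (-ν) / ν)
            + (((t + lam)/2) ^ (-mm) * (A ^ (-ν) / ν)
              + (((t + lam)/2) ^ (-mm) * (A ^ (-ν) / ν)
                + (t + lam - A) ^ (-(ν + 1)) * C))) :=
            mul_le_mul_of_nonneg_left hsum (rpow_nonneg ht0.le _)
        _ = (t ^ mm * (t + lam - A) ^ (-mm)) * (lam ^ (-ν) / ν)
            + (t ^ mm * (t + lam - A) ^ (-(ν + 1))) * C
            + (t ^ mm * ((t + lam)/2) ^ (-mm)) * (2 * (A ^ (-ν) / ν)) := by ring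
        _ = B t := by rw [ee1, ee2, ee3, hBdef]
    -- limits
    have hden : Tendsto (fun t : ℝ => t / (t + lam - A)) atTop (𝓝 1) := by
      simpa only [← add_sub_assoc] using tendsto_ratio (lam - A)
    have hden2 : Tendsto (fun t : ℝ => 2 * t / (t + lam)) atTop (𝓝 2) := by
      have := (tendsto_ratio lam).const_mul (2:ℝ)
      simpa only [mul_div_assoc, mul_one] using this
    have hpow1 : Tendsto (fun t : ℝ => (t / (t + lam - A)) ^ mm) atTop (𝓝 1) := by
      have := ((Real.continuousAt_rpow_const 1 mm (Or.inl one_ne_zero)).tendsto).comp hden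
      simpa [Function.comp_def, Real.one_rpow] using this
    have hpow2 : Tendsto (fun t : ℝ => (t / (t + lam - A)) ^ (ν + 1)) atTop (𝓝 1) := by
      have := ((Real.continuousAt_rpow_const 1 (ν + 1) (Or.inl one_ne_zero)).tendsto).comp hden
      simpa [Function.comp_def, Real.one_rpow] using this
    have hpow3 : Tendsto (fun t : ℝ => (2 * t / (t + lam)) ^ mm) atTop (𝓝 ((2:ℝ) ^ mm)) := by
      have := ((Real.continuousAt_rpow_const 2 mm (Or.inl two_ne_zero)).tendsto).comp hden2
      simpa [Function.comp_def] using this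
    obtain ⟨L0, htail, hL0C⟩ : ∃ L0 : ℝ, Tendsto (fun t : ℝ => t ^ (mm - ν - 1)) atTop (𝓝 L0)
        ∧ 1 * L0 * C ≤ lam ^ (-ν) / ν := by
      rcases le_or_gt (ν + 1) (2 * ν) with hcase | hcase
      · have hmeq : mm = ν + 1 := hmmdef.trans (min_eq_right hcase)
        refine ⟨1, ?_, ?_⟩
        · have h0 : mm - ν - 1 = 0 := by rw [hmeq]; ring
          simp only [h0, Real.rpow_zero]
          exact tendsto_const_nhds
        · have hCle : C ≤ lam ^ (-ν) / ν := by
            rw [hCdef]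
            calc (∫ v in lam..A, v ^ (-mm)) = ∫ v in lam..A, v ^ (-(ν + 1)) := by rw [hmeq]
              _ ≤ lam ^ (-ν) / ν := aux_int_rpow hν hlam hlA.le
          linarith
      · refine ⟨0, ?_, by simpa using hlamν.le⟩
        have h0 : mm - ν - 1 = -(1 - ν) := by
          rw [hmmdef, min_eq_left hcase.le]; ring
        simp only [h0]
        exact tendsto_rpow_neg_atTop (by linarith)
    have hBlim : Tendsto B atTop
        (𝓝 (1 * (lam ^ (-ν) / ν) + 1 * L0 * C + (2:ℝ) ^ mm * (2 * (A ^ (-ν) / ν)))) := by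
      rw [hBdef]
      exact ((hpow1.mul_const _).add ((hpow2.mul htail).mul_const _)).add (hpow3.mul_const _)
    -- conclude
    have hnn : ∀ᶠ t in atTop, (0:ℝ) ≤ t ^ mm * K₂ ν t lam := by
      filter_upwards [eventually_ge_atTop lam] with t ht
      have hK2 : 0 ≤ K₂ ν t lam := by
        rw [K₂]
        refine intervalIntegral.integral_nonneg ht fun x hx => ?_
        exact mul_nonneg (rpow_nonneg (le_trans hlam.le hx.1) _)
          (rpow_nonneg (by have := hx.2; linarith) _)
      exact mul_nonneg (rpow_nonneg (by linarith) _) hK2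
    calc limsup (fun t : ℝ => t ^ mm * K₂ ν t lam) atTop
        ≤ limsup B atTop :=
          limsup_le_limsup hev (isCoboundedUnder_le_of_eventually_le _ hnn)
            hBlim.isBoundedUnder_le
      _ = 1 * (lam ^ (-ν) / ν) + 1 * L0 * C + (2:ℝ) ^ mm * (2 * (A ^ (-ν) / ν)) :=
          hBlim.limsup_eq
      _ ≤ 2 * (lam ^ (-ν) / ν) + (2:ℝ) ^ (mm + 1) * (A ^ (-ν) / ν) := by
          have h2m : (2:ℝ) ^ (mm + 1) = (2:ℝ) ^ mm * 2 := by
            rw [Real.rpow_add (by norm_num : (0:ℝ) < 2), Real.rpow_one]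
          rw [h2m]
          have := hL0C
          linarith
  -- wrap up
  have hfin : 2 / (ν * lam ^ ν) = 2 * (lam ^ (-ν) / ν) := by
    rw [Real.rpow_neg hlam.le]
    have h1 : lam ^ ν ≠ 0 := (rpow_pos_of_pos hlam ν).ne'
    field_simp
  rw [hfin]
  refine le_of_forall_pos_le_add fun ε hε => ?_
  have h2p : (0:ℝ) < 2 ^ (mm + 1) := rpow_pos_of_pos two_pos _
  set δ : ℝ := ε * ν / (2 ^ (mm + 1)) with hδdef
  have hδ0 : 0 < δ := div_pos (mul_pos hε hν) h2p
  set A : ℝ := max (lam + 1) (δ ^ (-1/ν)) with hAdef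
  have hlA : lam < A := lt_of_lt_of_le (by linarith) (le_max_left _ _)
  have hδν : 0 < δ ^ (-1/ν) := rpow_pos_of_pos hδ0 _
  have hAδ : A ^ (-ν) ≤ δ := by
    have h1 : δ ^ (-1/ν) ≤ A := le_max_right _ _
    have h2 : A ^ (-ν) ≤ (δ ^ (-1/ν)) ^ (-ν) := rpow_le_rpow_of_nonpos hδν h1 (by linarith)
    rwa [← Real.rpow_mul hδ0.le, show -1/ν * -ν = 1 from by field_simp, Real.rpow_one] at h2
  refine (key A hlA).trans ?_
  have hlast : (2:ℝ) ^ (mm + 1) * (A ^ (-ν) / ν) ≤ ε := by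
    calc (2:ℝ) ^ (mm + 1) * (A ^ (-ν) / ν) ≤ (2:ℝ) ^ (mm + 1) * (δ / ν) := by gcongr
      _ = ε := by rw [hδdef]; field_simp
  linarith
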